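/- Let λ ∈ ℂ and X = J(λ,n) ⊕ (-J(λ,n)ᵀ) ∈ M(2n,ℂ) (block diagonal), a Hamiltonian matrix. Then g = [[0, τ],[-τ, 0]], where τ is the n×n anti-identity matrix, is a symplectic matrix with g² = -I₂ₙ such that gXg⁻¹ = -X. -/

import Mathlib

open Matrix Complex

/-- Jordan block J(lam, n): lam on diagonal, 1 on superdiagonal. -/
def Jb (lam : ℂ) (n : ℕ) : Matrix (Fin n) (Fin n) ℂ :=
  fun i j => if (i : ℕ) + 1 = (j : ℕ) then 1 else if i = j then lam else 0

/-- sigma = diag(1, -1, 1, ..., (-1)^(n-1)). -/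
def sigmaM (n : ℕ) : Matrix (Fin n) (Fin n) ℂ :=
  Matrix.diagonal (fun i => (-1 : ℂ) ^ (i : ℕ))

/-- tau: anti-identity, tau_{i,j} = 1 iff i+j = n+1 (1-indexed). -/
def tauM (n : ℕ) : Matrix (Fin n) (Fin n) ℂ :=
  fun i j => if (i : ℕ) + (j : ℕ) + 2 = n + 1 then 1 else 0

/-- The standard symplectic form matrix J = [[0, I],[-I, 0]]. -/
def Jstd (I : Type*) [DecidableEq I] : Matrix (I ⊕ I) (I ⊕ I) ℂ :=
  Matrix.fromBlocks 0 1 (-1) 0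

/-- Expanding sum of block matrices. -/
def esum {m n : ℕ}
    (A : Matrix (Fin m ⊕ Fin m) (Fin m ⊕ Fin m) ℂ)
    (B : Matrix (Fin n ⊕ Fin n) (Fin n ⊕ Fin n) ℂ) :
    Matrix ((Fin m ⊕ Fin n) ⊕ (Fin m ⊕ Fin n)) ((Fin m ⊕ Fin n) ⊕ (Fin m ⊕ Fin n)) ℂ :=
  Matrix.fromBlocks
    (Matrix.fromBlocks A.toBlocks₁₁ 0 0 B.toBlocks₁₁)
    (Matrix.fromBlocks A.toBlocks₁₂ 0 0 B.toBlocks₁₂)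
    (Matrix.fromBlocks A.toBlocks₂₁ 0 0 B.toBlocks₂₁)
    (Matrix.fromBlocks A.toBlocks₂₂ 0 0 B.toBlocks₂₂)


lemma tau_apply (n : ℕ) (i j : Fin n) :
    tauM n i j = if j = Fin.rev i then 1 else 0 := by
  unfold tauM
  have hi := i.isLt
  have hj := j.isLt
  have : ((i : ℕ) + (j : ℕ) + 2 = n + 1) ↔ (j = Fin.rev i) := by
    rw [Fin.ext_iff, Fin.val_rev]
    omega
  simp [this]

lemma tau_symm (n : ℕ) : (tauM n)ᵀ = tauM n := by
  ext i j
  unfold tauM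
  show (if (j : ℕ) + (i : ℕ) + 2 = n + 1 then (1:ℂ) else 0) = if (i : ℕ) + (j : ℕ) + 2 = n + 1 then 1 else 0
  congr 1
  simp only [eq_iff_iff]
  omega

lemma tau_mul {n : ℕ} (A : Matrix (Fin n) (Fin n) ℂ) :
    tauM n * A = A.submatrix Fin.rev id := by
  ext i j
  rw [Matrix.mul_apply]
  simp [tau_apply]

lemma mul_tau {n : ℕ} (A : Matrix (Fin n) (Fin n) ℂ) :
    A * tauM n = A.submatrix id Fin.rev := by
  ext i j
  rw [Matrix.mul_apply]
  have : ∀ k : Fin n, tauM n k j = if k = Fin.rev j then 1 else 0 := by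
    intro k
    rw [tau_apply]
    congr 1
    simp only [eq_iff_iff]
    constructor <;> intro h <;> simp [h, Fin.rev_rev]
  simp [this]

lemma tau_mul_tau (n : ℕ) : tauM n * tauM n = 1 := by
  rw [tau_mul]
  ext i j
  simp [tau_apply, Matrix.one_apply, Fin.rev_rev, eq_comm]

lemma tau_J_tau (n : ℕ) (lam : ℂ) :
    tauM n * Jb lam n * tauM n = (Jb lam n)ᵀ := by
  rw [tau_mul, mul_tau]
  ext i j
  have hi := i.isLt
  have hj := j.isLt
  simp only [Matrix.submatrix_apply, Matrix.transpose_apply, Jb, id_eq,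
    Fin.ext_iff, Fin.val_rev]
  split_ifs <;> first | rfl | omega

lemma tau_Jt_tau (n : ℕ) (lam : ℂ) :
    tauM n * (Jb lam n)ᵀ * tauM n = Jb lam n := by
  rw [tau_mul, mul_tau]
  ext i j
  have hi := i.isLt
  have hj := j.isLt
  simp only [Matrix.submatrix_apply, Matrix.transpose_apply, Jb, id_eq,
    Fin.ext_iff, Fin.val_rev]
  split_ifs <;> first | rfl | omega

theorem stmt14 (n : ℕ) (lam : ℂ) :
    let X : Matrix (Fin n ⊕ Fin n) (Fin n ⊕ Fin n) ℂ :=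
      Matrix.fromBlocks (Jb lam n) 0 0 (-(Jb lam n)ᵀ)
    let g : Matrix (Fin n ⊕ Fin n) (Fin n ⊕ Fin n) ℂ :=
      Matrix.fromBlocks 0 (tauM n) (-(tauM n)) 0
    (Xᵀ * Jstd (Fin n) = -(Jstd (Fin n) * X)) ∧
    (gᵀ * Jstd (Fin n) * g = Jstd (Fin n)) ∧
    g * g = -1 ∧ g * X * g⁻¹ = -X := by
  set X : Matrix (Fin n ⊕ Fin n) (Fin n ⊕ Fin n) ℂ :=
      Matrix.fromBlocks (Jb lam n) 0 0 (-(Jb lam n)ᵀ) with hX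
  set g : Matrix (Fin n ⊕ Fin n) (Fin n ⊕ Fin n) ℂ :=
      Matrix.fromBlocks 0 (tauM n) (-(tauM n)) 0 with hg
  have hτ2 := tau_mul_tau n
  have h1 : Xᵀ * Jstd (Fin n) = -(Jstd (Fin n) * X) := by
    rw [hX]
    simp [Jstd, Matrix.fromBlocks_transpose, Matrix.fromBlocks_multiply,
      Matrix.fromBlocks_neg]
  have h3 : g * g = -1 := by
    rw [hg, Matrix.fromBlocks_multiply]
    have : (-1 : Matrix (Fin n ⊕ Fin n) (Fin n ⊕ Fin n) ℂ) =
        Matrix.fromBlocks (-1) 0 0 (-1) := by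
      rw [← Matrix.fromBlocks_one, Matrix.fromBlocks_neg]
      simp
    rw [this]
    simp [hτ2]
  have h2 : gᵀ * Jstd (Fin n) * g = Jstd (Fin n) := by
    rw [hg]
    simp [Jstd, Matrix.fromBlocks_transpose, Matrix.fromBlocks_multiply,
      tau_symm, hτ2]
  have hginv : g⁻¹ = -g := by
    apply Matrix.inv_eq_right_inv
    rw [Matrix.mul_neg, h3]
    simp
  have h4 : g * X * g⁻¹ = -X := by
    rw [hginv, Matrix.mul_neg, neg_eq_iff_eq_neg, neg_neg]
    rw [hg, hX, Matrix.fromBlocks_multiply, Matrix.fromBlocks_multiply]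
    simp only [Matrix.mul_zero, Matrix.zero_mul, add_zero, zero_add,
      Matrix.neg_mul, Matrix.mul_neg, neg_neg, tau_Jt_tau, tau_J_tau]
  exact ⟨h1, h2, h3, h4⟩
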